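/- Let d ≥ 2 be an integer and k > 0 a real number. Let X and Y be independent random variables, X having the standard Gaussian distribution N(0,1) and Y having the chi-square distribution with d degrees of freedom (the Gamma distribution with shape d/2 and rate 1/2). Then P( X ≥ √(kY) ) ≤ Γ((d−1)/2) / ( 2 √(π k) · (1+k)^{(d−1)/2} · Γ(d/2) ). -/

import Mathlib

open MeasureTheory ProbabilityTheory Real Set Filter

lemma xexp_deriv (x : ℝ) : HasDerivAt (fun x : ℝ => -Real.exp (-(x^2)/2)) (x * Real.exp (-(x^2)/2)) x := by
  have h : HasDerivAt (fun x : ℝ => -(x^2)/2) (-x) x := by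
    have := ((hasDerivAt_pow 2 x).neg).div_const 2
    simpa using this.congr_deriv (by ring)
  have := (h.exp).neg
  exact this.congr_deriv (by ring)

lemma xexp_tendsto : Tendsto (fun x : ℝ => -Real.exp (-(x^2)/2)) atTop (nhds 0) := by
  rw [← neg_zero]
  refine Tendsto.neg ?_
  refine Real.tendsto_exp_atBot.comp ?_
  apply Tendsto.atBot_div_const (by norm_num)
  exact tendsto_neg_atBot_iff.mpr (tendsto_pow_atTop (by norm_num))

lemma xexp_integrableOn {t : ℝ} (ht : 0 < t) :
    IntegrableOn (fun x : ℝ => x * Real.exp (-(x^2)/2)) (Ioi t) := by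
  refine integrableOn_Ioi_deriv_of_nonneg' (fun x hx => xexp_deriv x) ?_ xexp_tendsto
  intro x hx
  have : (0:ℝ) < x := lt_of_lt_of_le ht hx.le
  positivity

lemma xexp_integral {t : ℝ} (ht : 0 < t) :
    ∫ x in Ioi t, x * Real.exp (-(x^2)/2) = Real.exp (-(t^2)/2) := by
  rw [integral_Ioi_of_hasDerivAt_of_tendsto' (fun x _ => xexp_deriv x) (xexp_integrableOn ht) xexp_tendsto]
  ring

lemma mill {t : ℝ} (ht : 0 < t) :
    gaussianReal 0 1 (Ici t) ≤ ENNReal.ofReal (Real.exp (-(t^2)/2) / (Real.sqrt (2*Real.pi) * t)) := by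
  rw [gaussianReal_apply 0 one_ne_zero (Ici t)]
  have hpdf : ∀ x : ℝ, gaussianPDF 0 1 x = ENNReal.ofReal ((Real.sqrt (2*Real.pi))⁻¹ * Real.exp (-(x^2)/2)) := by
    intro x
    simp [gaussianPDF, gaussianPDFReal]
  calc ∫⁻ x in Ici t, gaussianPDF 0 1 x
      ≤ ∫⁻ x in Ici t, ENNReal.ofReal ((Real.sqrt (2*Real.pi))⁻¹ * t⁻¹ * (x * Real.exp (-(x^2)/2))) := by
        refine setLIntegral_mono' measurableSet_Ici (fun x hx => ?_)
        rw [hpdf x]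
        refine ENNReal.ofReal_le_ofReal ?_
        have hx' : t ≤ x := hx
        have h2 : (1:ℝ) ≤ t⁻¹ * x := by rwa [← div_eq_inv_mul, one_le_div ht]
        have hc : (0:ℝ) ≤ (Real.sqrt (2*Real.pi))⁻¹ * Real.exp (-(x^2)/2) :=
          mul_nonneg (inv_nonneg.mpr (Real.sqrt_nonneg _)) (Real.exp_pos _).le
        calc (Real.sqrt (2*Real.pi))⁻¹ * Real.exp (-(x^2)/2)
            = 1 * ((Real.sqrt (2*Real.pi))⁻¹ * Real.exp (-(x^2)/2)) := by ring
          _ ≤ (t⁻¹ * x) * ((Real.sqrt (2*Real.pi))⁻¹ * Real.exp (-(x^2)/2)) :=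
              mul_le_mul_of_nonneg_right h2 hc
          _ = (Real.sqrt (2*Real.pi))⁻¹ * t⁻¹ * (x * Real.exp (-(x^2)/2)) := by ring
    _ = ∫⁻ x in Ioi t, ENNReal.ofReal ((Real.sqrt (2*Real.pi))⁻¹ * t⁻¹ * (x * Real.exp (-(x^2)/2))) := by
        refine setLIntegral_congr ?_
        exact (Ioi_ae_eq_Ici (μ := volume) (a := t)).symm
    _ = ENNReal.ofReal (∫ x in Ioi t, (Real.sqrt (2*Real.pi))⁻¹ * t⁻¹ * (x * Real.exp (-(x^2)/2))) := by
        rw [ofReal_integral_eq_lintegral_ofReal]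
        · exact (xexp_integrableOn ht).const_mul _
        · refine (ae_restrict_iff' measurableSet_Ioi).mpr (ae_of_all _ (fun x hx => ?_))
          have hx' : (0:ℝ) < x := lt_trans ht hx
          positivity
    _ ≤ ENNReal.ofReal (Real.exp (-(t^2)/2) / (Real.sqrt (2*Real.pi) * t)) := by
        rw [integral_const_mul, xexp_integral ht]
        refine ENNReal.ofReal_le_ofReal (le_of_eq ?_)
        field_simp

theorem gaussian_chiSq_tail_bound {Ω : Type*} [MeasurableSpace Ω] (P : Measure Ω)
    [IsProbabilityMeasure P] (d : ℕ) (hd : 2 ≤ d) (k : ℝ) (hk : 0 < k)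
    (X Y : Ω → ℝ) (hXm : Measurable X) (hYm : Measurable Y)
    (hXY : IndepFun X Y P)
    (hX : Measure.map X P = gaussianReal 0 1)
    (hY : Measure.map Y P = gammaMeasure ((d : ℝ) / 2) (1 / 2)) :
    P {ω | Real.sqrt (k * Y ω) ≤ X ω}
      ≤ ENNReal.ofReal (Real.Gamma (((d : ℝ) - 1) / 2) /
          (2 * Real.sqrt (Real.pi * k) * (1 + k) ^ (((d : ℝ) - 1) / 2) *
            Real.Gamma ((d : ℝ) / 2))) := by
  set a : ℝ := ((d : ℝ) - 1) / 2 with ha_def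
  set r : ℝ := (1 + k) / 2 with hr_def
  have hd2 : (2:ℝ) ≤ (d:ℝ) := by exact_mod_cast hd
  have ha : 0 < a := by rw [ha_def]; linarith
  have hr : 0 < r := by rw [hr_def]; linarith
  have hd0 : 0 < (d:ℝ)/2 := by linarith
  have hGd : 0 < Real.Gamma ((d:ℝ)/2) := Real.Gamma_pos_of_pos hd0
  set γ : Measure ℝ := gammaMeasure ((d : ℝ) / 2) (1 / 2) with hγ_def
  have hS : MeasurableSet {p : ℝ × ℝ | Real.sqrt (k * p.1) ≤ p.2} :=
    measurableSet_le ((Real.continuous_sqrt.comp (continuous_const.mul continuous_fst)).measurable)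
      measurable_snd
  -- joint law
  have hmap : P.map (fun ω => (Y ω, X ω)) = γ.prod (gaussianReal 0 1) := by
    have h := (indepFun_iff_map_prod_eq_prod_map_map hYm.aemeasurable hXm.aemeasurable).mp hXY.symm
    rw [hY, hX] at h
    exact h
  have h1 : P {ω | Real.sqrt (k * Y ω) ≤ X ω}
      = ∫⁻ y, gaussianReal 0 1 (Ici (Real.sqrt (k * y))) ∂γ := by
    have : P {ω | Real.sqrt (k * Y ω) ≤ X ω}
        = P.map (fun ω => (Y ω, X ω)) {p : ℝ × ℝ | Real.sqrt (k * p.1) ≤ p.2} := by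
      rw [Measure.map_apply (hYm.prodMk hXm) hS]
      rfl
    rw [this, hmap, Measure.prod_apply hS]
    rfl
  -- a.e. positivity for γ
  have h0 : ∀ᵐ y ∂γ, 0 < y := by
    rw [ae_iff]
    have hset : {y : ℝ | ¬ 0 < y} = Iic 0 := by ext y; simp
    rw [hset, hγ_def, gammaMeasure, withDensity_apply _ measurableSet_Iic]
    rw [setLIntegral_congr (Iio_ae_eq_Iic (μ := volume) (a := (0:ℝ))).symm]
    exact lintegral_gammaPDF_of_nonpos le_rfl
  -- the bound function
  set g : ℝ → ℝ := fun y => Real.exp (-(k*y)/2) / (Real.sqrt (2*Real.pi) * Real.sqrt (k*y)) with hg_def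
  have hgm : Measurable g := by
    apply Measurable.div
    · exact (measurable_const.mul measurable_id).neg.div_const 2 |>.exp
    · exact measurable_const.mul ((measurable_const.mul measurable_id).sqrt)
  have h2 : ∫⁻ y, gaussianReal 0 1 (Ici (Real.sqrt (k * y))) ∂γ
      ≤ ∫⁻ y, ENNReal.ofReal (g y) ∂γ := by
    refine lintegral_mono_ae (h0.mono (fun y hy => ?_))
    have hky : 0 < k * y := mul_pos hk hy
    have ht : 0 < Real.sqrt (k * y) := Real.sqrt_pos.mpr hky
    have := mill ht
    rwa [Real.sq_sqrt hky.le] at this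
  -- pass to Lebesgue
  have h3 : ∫⁻ y, ENNReal.ofReal (g y) ∂γ
      = ∫⁻ y in Ioi 0, gammaPDF ((d:ℝ)/2) (1/2) y * ENNReal.ofReal (g y) := by
    rw [hγ_def, gammaMeasure, lintegral_withDensity_eq_lintegral_mul _
      (show Measurable (gammaPDF ((d:ℝ)/2) (1/2)) from (measurable_gammaPDFReal _ _).ennreal_ofReal)
      (hgm.ennreal_ofReal)]
    rw [← lintegral_indicator measurableSet_Ioi]
    refine lintegral_congr_ae ?_
    have hne : ∀ᵐ (y:ℝ), y ≠ 0 := by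
      rw [ae_iff]
      simpa using Real.volume_singleton (a := 0)
    refine hne.mono (fun y hy => ?_)
    rcases lt_trichotomy y 0 with h|h|h
    · simp only [Set.indicator_of_notMem (by simp [not_lt, h.le] : y ∉ Ioi 0)]
      simp [Pi.mul_apply, gammaPDF_of_neg h]
    · exact absurd h hy
    · simp [Set.indicator_of_mem (mem_Ioi.mpr h)]
  set C : ℝ := (1/2:ℝ) ^ ((d:ℝ)/2) / Real.Gamma ((d:ℝ)/2) / (Real.sqrt (2*Real.pi) * Real.sqrt k)
    with hC_def
  have hC : 0 ≤ C := by
    rw [hC_def]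
    positivity
  have h4 : ∫⁻ y in Ioi 0, gammaPDF ((d:ℝ)/2) (1/2) y * ENNReal.ofReal (g y)
      = ∫⁻ y in Ioi 0, ENNReal.ofReal (C * (y ^ (a - 1) * Real.exp (-(r * y)))) := by
    refine setLIntegral_congr_fun measurableSet_Ioi (fun y hy => ?_)
    have hy : 0 < y := hy
    rw [gammaPDF_of_nonneg hy.le, ← ENNReal.ofReal_mul (by positivity)]
    congr 1
    have e1 : y ^ (a - 1) = y ^ ((d:ℝ)/2 - 1) * (Real.sqrt y)⁻¹ := by
      rw [Real.sqrt_eq_rpow, ← Real.rpow_neg hy.le, ← Real.rpow_add hy]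
      congr 1
      rw [ha_def]; ring
    have e2 : Real.exp (-(1/2 * y)) * Real.exp (-(k*y)/2) = Real.exp (-(r * y)) := by
      rw [← Real.exp_add]
      congr 1
      rw [hr_def]; ring
    have hsy : Real.sqrt y ≠ 0 := by positivity
    have hsk : Real.sqrt k ≠ 0 := by positivity
    have hsp : Real.sqrt (2*Real.pi) ≠ 0 := by positivity
    rw [hg_def]
    simp only
    rw [e1, ← e2, hC_def, Real.sqrt_mul hk.le]
    field_simp
  have hint : IntegrableOn (fun y : ℝ => y ^ (a - 1) * Real.exp (-(r * y))) (Ioi 0) := by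
    have := integrableOn_rpow_mul_exp_neg_mul_rpow (s := a - 1) (p := 1) (b := r)
      (by linarith) one_pos hr
    simpa [Real.rpow_one, neg_mul] using this
  have h5 : ∫⁻ y in Ioi 0, ENNReal.ofReal (C * (y ^ (a - 1) * Real.exp (-(r * y))))
      = ENNReal.ofReal (C * ((1/r) ^ a * Real.Gamma a)) := by
    simp_rw [ENNReal.ofReal_mul hC]
    rw [lintegral_const_mul' _ _ ENNReal.ofReal_ne_top]
    rw [← ofReal_integral_eq_lintegral_ofReal hint ?_]
    · rw [integral_rpow_mul_exp_neg_mul_Ioi ha hr]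
    · refine (ae_restrict_iff' measurableSet_Ioi).mpr (ae_of_all _ (fun y hy => ?_))
      have : (0:ℝ) < y := hy
      positivity
  have h6 : C * ((1/r) ^ a * Real.Gamma a)
      = Real.Gamma a / (2 * Real.sqrt (Real.pi * k) * (1 + k) ^ a * Real.Gamma ((d:ℝ)/2)) := by
    have hk1 : (0:ℝ) < 1 + k := by linarith
    have e1 : (1/r : ℝ) = 2/(1+k) := by rw [hr_def]; field_simp
    have e2 : ((2:ℝ)/(1+k))^a = 2^a / (1+k)^a := Real.div_rpow (by norm_num : (0:ℝ) ≤ 2) hk1.le a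
    have e3 : ((1:ℝ)/2)^((d:ℝ)/2) * 2^a = (Real.sqrt 2)⁻¹ := by
      rw [one_div, Real.inv_rpow (by norm_num : (0:ℝ) ≤ 2), ← Real.rpow_neg (by norm_num : (0:ℝ) ≤ 2),
        ← Real.rpow_add (by norm_num : (0:ℝ) < 2),
        show -((d:ℝ)/2) + a = -(1/2) by rw [ha_def]; ring,
        Real.rpow_neg (by norm_num : (0:ℝ) ≤ 2), ← Real.sqrt_eq_rpow]
    have hsk : Real.sqrt k ≠ 0 := by positivity
    have hs2 : Real.sqrt 2 ≠ 0 := by positivity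
    have hA : (0:ℝ) < (1+k)^a := Real.rpow_pos_of_pos hk1 a
    have h22 : Real.sqrt 2 * Real.sqrt 2 = 2 := Real.mul_self_sqrt (by norm_num)
    have e3' : ((1:ℝ)/2)^((d:ℝ)/2) * 2^a * Real.sqrt 2 = 1 := by
      rw [e3]; field_simp
    rw [hC_def, e1, e2, Real.sqrt_mul (by norm_num : (0:ℝ)≤2), Real.sqrt_mul Real.pi_nonneg]
    field_simp
    linear_combination Real.sqrt 2 * e3' - ((1/2:ℝ)^((d:ℝ)/2) * 2^a) * h22
  rw [h1]
  calc ∫⁻ y, gaussianReal 0 1 (Ici (Real.sqrt (k * y))) ∂γ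
      ≤ ∫⁻ y, ENNReal.ofReal (g y) ∂γ := h2
    _ = ENNReal.ofReal (C * ((1/r) ^ a * Real.Gamma a)) := by rw [h3, h4, h5]
    _ = _ := by rw [h6]
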